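/- In the transformed scheme Ḡ, a ground subterm is a redex if and only if it is of the form F̄ t₁ ... t_k Δ (the last argument is Δ); moreover in any term reachable from the initial non-terminal I, no argument t_i of such a redex contains an occurrence of Δ. -/

import Mathlib

/-- Simple types: ground type `o` and arrows. -/
inductive Ty : Type
  | o : Ty
  | arr : Ty → Ty → Ty
deriving DecidableEq

namespace Ty

/-- order(o)=0, order(τ₁→τ₂)=max(order τ₁ + 1, order τ₂). -/
def order : Ty → ℕ
  | .o => 0
  | .arr a b => max (a.order + 1) b.order

/-- The list τ₁,...,τ_k such that τ = τ₁ → ... → τ_k → o. -/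
def args : Ty → List Ty
  | .o => []
  | .arr a b => a :: b.args

/-- The arity of a type. -/
def arity (τ : Ty) : ℕ := τ.args.length

/-- The over-bar transformation: ō = o→o, (τ₁→τ₂)̄ = τ̄₁→τ̄₂. -/
def bar : Ty → Ty
  | .o => .arr .o .o
  | .arr a b => .arr a.bar b.bar

end Ty

/-- Applicative terms over a typed alphabet. -/
inductive Tm (α : Type) : Type
  | sym : α → Tm α
  | app : Tm α → Tm α → Tm α

/-- Typing judgment for terms over a typed alphabet. -/
inductive HasType {α : Type} (ty : α → Ty) : Tm α → Ty → Prop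
  | sym (a : α) : HasType ty (.sym a) (ty a)
  | app {t s : Tm α} {τ' τ : Ty} :
      HasType ty t (.arr τ' τ) → HasType ty s τ' → HasType ty (.app t s) τ

/-- `mkApp h [t₁,...,t_k] = h t₁ ... t_k`. -/
def mkApp {α : Type} (h : Tm α) (ts : List (Tm α)) : Tm α := ts.foldl .app h

/-- Subterm relation. -/
inductive Subt {α : Type} : Tm α → Tm α → Prop
  | refl (t : Tm α) : Subt t t
  | appL {s t u : Tm α} : Subt s t → Subt s (.app t u)
  | appR {s t u : Tm α} : Subt s u → Subt s (.app t u)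
/-- The typing environment for a rule body with variables of types given by
the argument types of τ. -/
def ruleEnv (Sig Nt : Type) (sigTy : Sig → Ty) (ntTy : Nt → Ty) (τ : Ty) :
    Sig ⊕ Nt ⊕ Fin τ.arity → Ty
  | .inl a => sigTy a
  | .inr (.inl F) => ntTy F
  | .inr (.inr i) => τ.args.get i

/-- A higher-order recursion scheme. -/
structure HORS where
  /-- terminal symbols -/
  Sig : Type
  sigTy : Sig → Ty
  sigOrder : ∀ a, (sigTy a).order ≤ 1
  /-- non-terminal symbols -/
  Nt : Type
  ntTy : Nt → Ty
  /-- the rewrite rule for each non-terminal `F x₁ ... x_k → e` given by its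
  right-hand side, a term over terminals, non-terminals and the variables. -/
  rule : (F : Nt) → Option (Tm (Sig ⊕ Nt ⊕ Fin (ntTy F).arity))
  ruleTyped : ∀ (F : Nt) (e : Tm (Sig ⊕ Nt ⊕ Fin (ntTy F).arity)), rule F = some e →
    HasType (ruleEnv Sig Nt sigTy ntTy (ntTy F)) e .o
  /-- initial non-terminal -/
  S : Nt
  S_ty : ntTy S = .o

namespace HORS

variable (G : HORS)

/-- Closed (rule-free) terms over terminals and non-terminals. -/
abbrev T : Type := Tm (G.Sig ⊕ G.Nt)

/-- Typing of closed symbols. -/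
def symTy : G.Sig ⊕ G.Nt → Ty
  | .inl a => G.sigTy a
  | .inr F => G.ntTy F

/-- Instantiation of a rule body with actual arguments. -/
def inst {k : ℕ} : Tm (G.Sig ⊕ G.Nt ⊕ Fin k) → (Fin k → G.T) → G.T
  | .sym (.inl a), _ => .sym (.inl a)
  | .sym (.inr (.inl F)), _ => .sym (.inr F)
  | .sym (.inr (.inr i)), ts => ts i
  | .app t s, ts => .app (inst t ts) (inst s ts)

/-- A redex: a fully applied non-terminal possessing a rewrite rule. -/
def IsRedex (t : G.T) : Prop :=
  ∃ (F : G.Nt) (ts : List G.T),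
    t = mkApp (.sym (.inr F)) ts ∧ ts.length = (G.ntTy F).arity ∧ (G.rule F).isSome

/-- A term contains a redex. -/
def HasRedex (t : G.T) : Prop := ∃ s, Subt s t ∧ G.IsRedex s

/-- Unrestricted rewriting. -/
inductive Step : G.T → G.T → Prop
  | head {F : G.Nt} {ts : List G.T} {e} (hr : G.rule F = some e)
      (hl : ts.length = (G.ntTy F).arity) :
      Step (mkApp (.sym (.inr F)) ts) (G.inst e (fun i => ts.get (Fin.cast hl.symm i)))
  | appL {t t' s : G.T} : Step t t' → Step (.app t s) (.app t' s)
  | appR {t s s' : G.T} : Step s s' → Step (.app t s) (.app t s')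

/-- Innermost-outermost rewriting: the arguments of the contracted redex
contain no redex. -/
inductive StepIO : G.T → G.T → Prop
  | head {F : G.Nt} {ts : List G.T} {e} (hr : G.rule F = some e)
      (hl : ts.length = (G.ntTy F).arity) (hio : ∀ s ∈ ts, ¬ G.HasRedex s) :
      StepIO (mkApp (.sym (.inr F)) ts) (G.inst e (fun i => ts.get (Fin.cast hl.symm i)))
  | appL {t t' s : G.T} : StepIO t t' → StepIO (.app t s) (.app t' s)
  | appR {t s s' : G.T} : StepIO s s' → StepIO (.app t s) (.app t s')

/-- Outermost-innermost rewriting: no redex strictly contains the contracted redex. -/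
inductive StepOI : G.T → G.T → Prop
  | head {F : G.Nt} {ts : List G.T} {e} (hr : G.rule F = some e)
      (hl : ts.length = (G.ntTy F).arity) :
      StepOI (mkApp (.sym (.inr F)) ts) (G.inst e (fun i => ts.get (Fin.cast hl.symm i)))
  | appL {t t' s : G.T} : ¬ G.IsRedex (.app t s) → StepOI t t' → StepOI (.app t s) (.app t' s)
  | appR {t s s' : G.T} : ¬ G.IsRedex (.app t s) → StepOI s s' → StepOI (.app t s) (.app t s')

/-- Terms accessible from the initial non-terminal by unrestricted derivations. -/
def Acc' : Set G.T := {t | Relation.ReflTransGen G.Step (.sym (.inr G.S)) t}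

/-- Terms accessible by IO derivations. -/
def AccIO : Set G.T := {t | Relation.ReflTransGen G.StepIO (.sym (.inr G.S)) t}

/-- Terms accessible by OI derivations. -/
def AccOI : Set G.T := {t | Relation.ReflTransGen G.StepOI (.sym (.inr G.S)) t}

end HORS

/-- Possibly infinite trees over Σ ∪ {⊥}, as partial labelings of positions;
`some none` is the label ⊥, `some (some a)` the label a ∈ Σ. -/
def LTree (σ : Type) : Type := List ℕ → Option (Option σ)

/-- The approximation order on trees. -/
def TLe {σ : Type} (t t' : LTree σ) : Prop :=
  ∀ u x, t u = some x → ∃ y, t' u = some y ∧ (x = none ∨ y = x)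

/-- `v` is the least upper bound of the set `A` of trees. -/
def IsTreeLub {σ : Type} (A : Set (LTree σ)) (v : LTree σ) : Prop :=
  (∀ t ∈ A, TLe t v) ∧ ∀ w, (∀ t ∈ A, TLe t w) → TLe v w

/-- Number of arguments in the application spine. -/
def Tm.nArgs {α : Type} : Tm α → ℕ
  | .sym _ => 0
  | .app t _ => t.nArgs + 1

namespace HORS

variable (G : HORS)

/-- The ⊥-transformation: the tree obtained from a term by replacing maximal
non-terminal-headed subterms with ⊥. -/
def bt : G.T → LTree G.Sig
  | .sym (.inl a) => fun u => if u = [] then some (some a) else none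
  | .sym (.inr _) => fun u => if u = [] then some none else none
  | .app t s => fun u =>
      match bt t [] with
      | some (some _) =>
          match u with
          | [] => bt t []
          | j :: v => if j = t.nArgs then bt s v else bt t u
      | _ => if u = [] then some none else none

end HORS
namespace Ty

lemma bar_args (τ : Ty) : τ.bar.args = τ.args.map Ty.bar ++ [Ty.o] := by
  induction τ with
  | o => rfl
  | arr a b iha ihb => simp [Ty.bar, Ty.args, ihb]

lemma bar_arity (τ : Ty) : τ.bar.arity = τ.arity + 1 := by
  simp [Ty.arity, bar_args]

lemma bar_args_get (τ : Ty) (i : Fin τ.arity) :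
    τ.bar.args.get (Fin.cast (bar_arity τ).symm i.castSucc) = (τ.args.get i).bar := by
  have hi : (i : ℕ) < (τ.args.map Ty.bar).length := by
    rw [List.length_map]; exact i.isLt
  have key : ∀ (h1 : (i : ℕ) < τ.bar.args.length),
      τ.bar.args[(i : ℕ)] = (τ.args[(i : ℕ)]'i.isLt).bar := by
    intro h1; simp [bar_args, List.getElem_append_left hi] <;> rfl
  exact List.get_eq_getElem.trans
    ((key _).trans (congrArg Ty.bar List.get_eq_getElem.symm))

lemma order_eq_zero {τ : Ty} (h : τ.order = 0) : τ = .o := by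
  cases τ with
  | o => rfl
  | arr a b => simp only [Ty.order, Nat.max_eq_zero_iff] at h; omega

lemma args_replicate {τ : Ty} (h : τ.order ≤ 1) : τ.args = List.replicate τ.arity .o := by
  induction τ with
  | o => rfl
  | arr a b iha ihb =>
      simp only [Ty.order, Nat.max_le] at h
      obtain ⟨h1, h2⟩ := h
      have ha : a = .o := order_eq_zero (by omega)
      subst ha
      have e1 : (Ty.arr .o b).args = .o :: b.args := rfl
      have e2 : (Ty.arr .o b).arity = b.arity + 1 := rfl
      rw [e1, e2, ihb h2, List.replicate_succ]

lemma args_foldr (τ : Ty) : τ.args.foldr .arr .o = τ := by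
  induction τ with
  | o => rfl
  | arr a b iha ihb => simp [Ty.args, ihb]

end Ty

namespace HORS

variable (G : HORS)

/-- Non-terminals of the transformed scheme Ḡ: the F̄'s, the ā's, and the two
ground non-terminals Δ (`false`) and I (`true`). -/
def NtBar : Type := G.Nt ⊕ G.Sig ⊕ Bool

/-- Types of the non-terminals of Ḡ. -/
def ntTyBar : G.NtBar → Ty
  | .inl F => (G.ntTy F).bar
  | .inr (.inl a) => (G.sigTy a).bar
  | .inr (.inr _) => .o

/-- The non-terminal Δ, as a term. -/
def deltaTm {k : ℕ} : Tm (G.Sig ⊕ G.NtBar ⊕ Fin k) := .sym (.inr (.inl (.inr (.inr false))))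

/-- The bar transformation ē of a rule body: terminals a become non-terminals
ā, non-terminals F become F̄, variables xᵢ become x̄ᵢ. -/
def barBody {τ : Ty} : Tm (G.Sig ⊕ G.Nt ⊕ Fin τ.arity) → Tm (G.Sig ⊕ G.NtBar ⊕ Fin τ.bar.arity)
  | .sym (.inl a) => .sym (.inr (.inl (.inr (.inl a))))
  | .sym (.inr (.inl F)) => .sym (.inr (.inl (.inl F)))
  | .sym (.inr (.inr i)) => .sym (.inr (.inr (Fin.cast (Ty.bar_arity τ).symm i.castSucc)))
  | .app t s => .app (barBody t) (barBody s)

/-- The body a (η₁ Δ) ... (η_k Δ) of the rule for ā. -/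
def aBody (a : G.Sig) : Tm (G.Sig ⊕ G.NtBar ⊕ Fin (G.sigTy a).bar.arity) :=
  mkApp (.sym (.inl a)) (List.ofFn fun i : Fin (G.sigTy a).arity =>
    .app (.sym (.inr (.inr (Fin.cast (Ty.bar_arity _).symm i.castSucc)))) G.deltaTm)

lemma hasType_mkApp {α : Type} (ty : α → Ty) :
    ∀ (ts : List (Tm α)) (h : Tm α),
      HasType ty h ((List.replicate ts.length Ty.o).foldr .arr .o) →
      (∀ t ∈ ts, HasType ty t .o) → HasType ty (mkApp h ts) .o := by
  intro ts
  induction ts with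
  | nil => intro h hh _; exact hh
  | cons t ts ih =>
      intro h hh hts
      have : HasType ty (.app h t) ((List.replicate ts.length Ty.o).foldr .arr .o) := by
        refine HasType.app ?_ (hts t (by simp))
        simpa [List.replicate_succ] using hh
      simpa [mkApp] using ih (.app h t) this (fun u hu => hts u (by simp [hu]))

lemma barBody_hasType (τ : Ty) {e : Tm (G.Sig ⊕ G.Nt ⊕ Fin τ.arity)} {σ : Ty}
    (h : HasType (ruleEnv G.Sig G.Nt G.sigTy G.ntTy τ) e σ) :
    HasType (ruleEnv G.Sig G.NtBar G.sigTy G.ntTyBar τ.bar) (G.barBody e) σ.bar := by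
  induction h with
  | sym x =>
      rcases x with a | F | i
      · exact HasType.sym _
      · exact HasType.sym _
      · show HasType _ _ ((τ.args.get i).bar)
        rw [← Ty.bar_args_get τ i]
        exact HasType.sym (ty := ruleEnv G.Sig G.NtBar G.sigTy G.ntTyBar τ.bar)
          (.inr (.inr (Fin.cast (Ty.bar_arity τ).symm i.castSucc)))
  | app h1 h2 ih1 ih2 => exact HasType.app ih1 ih2

lemma aBody_hasType (a : G.Sig) :
    HasType (ruleEnv G.Sig G.NtBar G.sigTy G.ntTyBar (G.sigTy a).bar) (G.aBody a) .o := by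
  apply hasType_mkApp
  · have hrep : G.sigTy a = (List.replicate
        ((List.ofFn fun i : Fin (G.sigTy a).arity =>
          (Tm.app (.sym (.inr (.inr (Fin.cast (Ty.bar_arity _).symm i.castSucc)))) G.deltaTm :
            Tm (G.Sig ⊕ G.NtBar ⊕ Fin (G.sigTy a).bar.arity))).length) Ty.o).foldr .arr .o := by
      rw [List.length_ofFn, ← Ty.args_replicate (G.sigOrder a), Ty.args_foldr]
    exact hrep ▸ HasType.sym (Sum.inl a)
  · intro t ht
    rw [List.mem_ofFn] at ht
    obtain ⟨i, rfl⟩ := ht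
    have key : ruleEnv G.Sig G.NtBar G.sigTy G.ntTyBar (G.sigTy a).bar
        (Sum.inr (Sum.inr (Fin.cast (Ty.bar_arity _).symm i.castSucc))) = Ty.arr Ty.o Ty.o := by
      show (G.sigTy a).bar.args.get (Fin.cast (Ty.bar_arity _).symm i.castSucc) = _
      rw [Ty.bar_args_get]
      have h0 : (G.sigTy a).args.get i = Ty.o := by
        exact (List.get_eq_getElem (l := (G.sigTy a).args) (i := i)).trans
          (by simp [Ty.args_replicate (G.sigOrder a)])
      rw [h0]; rfl
    have hη := HasType.sym (ty := ruleEnv G.Sig G.NtBar G.sigTy G.ntTyBar (G.sigTy a).bar)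
        (Sum.inr (Sum.inr (Fin.cast (Ty.bar_arity _).symm i.castSucc)))
    rw [key] at hη
    exact HasType.app (τ' := Ty.o) hη (HasType.sym _)

/-- The transformed scheme Ḡ. -/
def barScheme : HORS where
  Sig := G.Sig
  sigTy := G.sigTy
  sigOrder := G.sigOrder
  Nt := G.NtBar
  ntTy := G.ntTyBar
  rule := fun N => match N with
    | .inl F => (G.rule F).map (fun e =>
        (Tm.app (G.barBody e) G.deltaTm : Tm (G.Sig ⊕ G.NtBar ⊕ Fin (G.ntTy F).bar.arity)))
    | .inr (.inl a) => some (G.aBody a)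
    | .inr (.inr false) => none
    | .inr (.inr true) => some (.app (.sym (.inr (.inl (.inl G.S)))) G.deltaTm)
  ruleTyped := by
    rintro (F | a | (_ | _)) e he
    · replace he := Option.map_eq_some_iff.mp he
      obtain ⟨e₀, h₀, rfl⟩ := he
      exact HasType.app (τ' := .o) (G.barBody_hasType (G.ntTy F) (G.ruleTyped F e₀ h₀))
        (HasType.sym _)
    · cases he
      exact G.aBody_hasType a
    · cases he
    · cases he
      have h1 : HasType (ruleEnv G.Sig G.NtBar G.sigTy G.ntTyBar
            (G.ntTyBar (Sum.inr (Sum.inr true))))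
          (Tm.sym (Sum.inr (Sum.inl (Sum.inl G.S))))
          ((G.ntTy G.S).bar) := HasType.sym _
      rw [G.S_ty] at h1
      exact HasType.app (τ' := Ty.o) h1 (HasType.sym _)
  S := .inr (.inr true)
  S_ty := rfl

end HORS

/-- The non-terminal Δ of Ḡ. -/
def HORS.deltaNt (G : HORS) : G.NtBar := Sum.inr (Sum.inr false)

/-- The initial non-terminal I of Ḡ. -/
def HORS.initNt (G : HORS) : G.NtBar := Sum.inr (Sum.inr true)

namespace Ty

lemma bar_arrow : ∀ τ : Ty, ∃ a b, τ.bar = .arr a b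
  | .o => ⟨.o, .o, rfl⟩
  | .arr a b => ⟨a.bar, b.bar, rfl⟩

lemma bar_ne_o (τ : Ty) : τ.bar ≠ .o := by
  obtain ⟨a, b, h⟩ := bar_arrow τ; rw [h]; intro hc; cases hc

lemma arity_foldr (l : List Ty) (c : Ty) : (l.foldr .arr c).arity = l.length + c.arity := by
  induction l with
  | nil => simp
  | cons a l ih =>
      show (Ty.arr a (l.foldr .arr c)).arity = _
      simp only [Ty.arity, Ty.args, List.length_cons] at *
      omega

lemma foldr_arr_inj : ∀ (l₁ l₂ : List Ty) (c₁ c₂ : Ty), l₁.length = l₂.length →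
    l₁.foldr .arr c₁ = l₂.foldr .arr c₂ → l₁ = l₂ ∧ c₁ = c₂
  | [], [], c₁, c₂, _, h => ⟨rfl, h⟩
  | [], _ :: _, _, _, hl, _ => by simp at hl
  | _ :: _, [], _, _, hl, _ => by simp at hl
  | a :: l₁, b :: l₂, c₁, c₂, hl, h => by
      simp only [List.foldr] at h
      injection h with h1 h2
      obtain ⟨e1, e2⟩ := foldr_arr_inj l₁ l₂ c₁ c₂ (by simpa using hl) h2
      exact ⟨by rw [h1, e1], e2⟩

lemma bar_foldr (τ : Ty) : τ.bar = (τ.args.map Ty.bar).foldr .arr (.arr .o .o) := by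
  conv_lhs => rw [← args_foldr τ.bar]
  rw [bar_args, List.foldr_append]
  rfl

end Ty

lemma mkApp_concat {α : Type} (h : Tm α) (l : List (Tm α)) (x : Tm α) :
    mkApp h (l ++ [x]) = .app (mkApp h l) x := by
  simp [mkApp]

lemma mkApp_eq_sym {α : Type} : ∀ (l : List (Tm α)) (h : Tm α) (x : α),
    mkApp h l = .sym x → l = [] ∧ h = .sym x
  | [], _, _, e => ⟨rfl, e⟩
  | a :: l, h, x, e => by
      have := mkApp_eq_sym l (.app h a) x e
      exact absurd this.2 (by simp)

lemma mkApp_eq_app {α : Type} {c : α} {l : List (Tm α)} {t s : Tm α}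
    (e : mkApp (Tm.sym c) l = .app t s) :
    ∃ l', l = l' ++ [s] ∧ t = mkApp (Tm.sym c) l' := by
  rcases List.eq_nil_or_concat l with rfl | ⟨l', x, rfl⟩
  · exact absurd e (by simp [mkApp])
  · simp only [List.concat_eq_append] at e ⊢
    rw [mkApp_concat] at e
    injection e with e1 e2
    exact ⟨l', by rw [e2], e1.symm⟩

lemma mkApp_sym_inj {α : Type} (l₁ : List (Tm α)) : ∀ (l₂ : List (Tm α)) (x y : α),
    mkApp (.sym x) l₁ = mkApp (.sym y) l₂ → x = y ∧ l₁ = l₂ := by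
  induction l₁ using List.reverseRecOn with
  | nil =>
      intro l₂ x y e
      obtain ⟨rfl, e2⟩ := mkApp_eq_sym l₂ _ _ e.symm
      injection e2 with e3
      exact ⟨e3.symm, rfl⟩
  | append_singleton l a ih =>
      intro l₂ x y e
      rw [mkApp_concat] at e
      obtain ⟨l₂', rfl, ht⟩ := mkApp_eq_app e.symm
      obtain ⟨e1, e2⟩ := ih l₂' x y ht
      exact ⟨e1, by rw [e2]⟩

lemma subt_sym {α : Type} {s : Tm α} {x : α} (h : Subt s (.sym x)) : s = .sym x := by
  cases h; rfl

lemma forall₂_mem_left {α β : Type*} {R : α → β → Prop} : ∀ {l₁ : List α} {l₂ : List β},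
    List.Forall₂ R l₁ l₂ → ∀ a ∈ l₁, ∃ b, R a b := by
  intro l₁ l₂ h
  induction h with
  | nil => intro a ha; simp at ha
  | cons hr _ ih =>
      intro a ha
      rcases List.mem_cons.mp ha with rfl | ha
      · exact ⟨_, hr⟩
      · exact ih a ha

namespace HORS

/-- Good higher-typed terms of Ḡ: Δ-free spines headed by F̄ or ā. -/
inductive HT (G : HORS) : G.barScheme.T → Ty → Prop
  | headF (F : G.Nt) : HT G (.sym (.inr (.inl F))) (G.ntTy F).bar
  | headA (a : G.Sig) : HT G (.sym (.inr (.inr (.inl a)))) (G.sigTy a).bar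
  | app {t s : G.barScheme.T} {τ' τ : Ty} :
      HT G t (.arr τ' τ) → HT G s τ' → τ ≠ .o → HT G (.app t s) τ

/-- Good ground-ish terms of Ḡ. -/
inductive GT (G : HORS) : G.barScheme.T → Ty → Prop
  | init : GT G (.sym (.inr (.inr (.inr true)))) .o
  | delta : GT G (.sym (.inr (.inr (.inr false)))) .o
  | term (a : G.Sig) : GT G (.sym (.inl a)) (G.sigTy a)
  | app {t s : G.barScheme.T} {τ : Ty} :
      GT G t (.arr .o τ) → GT G s .o → GT G (.app t s) τ
  | nt {u : G.barScheme.T} : HT G u (.arr .o .o) →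
      GT G (.app u (.sym (.inr (.inr (.inr false))))) .o

variable (G : HORS)

lemma ht_arrow {u : G.barScheme.T} {σ : Ty} (h : G.HT u σ) : ∃ a b, σ = .arr a b := by
  cases h with
  | headF F => exact Ty.bar_arrow _
  | headA a => exact Ty.bar_arrow _
  | app h1 h2 hne =>
      cases σ with
      | o => exact absurd rfl hne
      | arr a b => exact ⟨a, b, rfl⟩

lemma ht_no_delta {u : G.barScheme.T} {σ : Ty} (h : G.HT u σ) :
    ¬ Subt (.sym (.inr (.inr (.inr false)))) u := by
  induction h with
  | headF F =>
      intro hs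
      have h := subt_sym hs
      injection h with h
      injection h with h
      injection h
  | headA a =>
      intro hs
      have h := subt_sym hs
      injection h with h
      injection h with h
      injection h with h
      injection h
  | app h1 h2 hne ih1 ih2 =>
      intro hs
      cases hs with
      | appL h => exact ih1 h
      | appR h => exact ih2 h

lemma ht_subt {s u : G.barScheme.T} (hs : Subt s u) :
    ∀ σ, G.HT u σ → ∃ σ', G.HT s σ' := by
  induction hs with
  | refl => exact fun σ h => ⟨σ, h⟩
  | appL h ih =>
      intro σ hh
      cases hh with
      | app h1 h2 hne => exact ih _ h1
  | appR h ih =>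
      intro σ hh
      cases hh with
      | app h1 h2 hne => exact ih _ h2

lemma ht_spine {u : G.barScheme.T} {σ : Ty} (h : G.HT u σ) :
    ∀ (N : G.NtBar) (ts : List G.barScheme.T), u = mkApp (.sym (.inr N)) ts →
      ∃ tys : List Ty, G.ntTyBar N = tys.foldr .arr σ ∧ List.Forall₂ (G.HT) ts tys := by
  induction h with
  | headF F =>
      intro N ts e
      obtain ⟨rfl, e2⟩ := mkApp_eq_sym ts _ _ e.symm
      injection e2 with e3
      injection e3 with e4
      exact ⟨[], by rw [e4]; rfl, .nil⟩
  | headA a =>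
      intro N ts e
      obtain ⟨rfl, e2⟩ := mkApp_eq_sym ts _ _ e.symm
      injection e2 with e3
      injection e3 with e4
      exact ⟨[], by rw [e4]; rfl, .nil⟩
  | app h1 h2 hne ih1 ih2 =>
      intro N ts e
      obtain ⟨l', rfl, hdec⟩ := mkApp_eq_app e.symm
      obtain ⟨tys', hty, hf⟩ := ih1 N l' hdec
      refine ⟨tys' ++ [_], ?_, List.rel_append hf (List.Forall₂.cons h2 .nil)⟩
      rw [hty, List.foldr_append]
      rfl

lemma gt_arrow {v : G.barScheme.T} {τ : Ty} (h : G.GT v τ) :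
    ∀ a b, τ = .arr a b → ∃ c gs, v = mkApp (.sym (.inl c)) gs := by
  induction h with
  | init => intro a b e; cases e
  | delta => intro a b e; cases e
  | term c => intro a b e; exact ⟨c, [], rfl⟩
  | app h1 h2 ih1 ih2 =>
      intro a b e
      obtain ⟨c, gs, rfl⟩ := ih1 .o _ rfl
      exact ⟨c, gs ++ [_], (mkApp_concat _ _ _).symm⟩
  | nt h => intro a b e; cases e

lemma gt_nt_inv {st : G.barScheme.T} {τ : Ty} (h : G.GT st τ) :
    ∀ (N : G.NtBar) (ts : List G.barScheme.T), st = mkApp (.sym (.inr N)) ts →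
      (ts = [] ∧ τ = .o ∧ (N = .inr (.inr true) ∨ N = .inr (.inr false))) ∨
      (∃ us, ts = us ++ [.sym (.inr (.inr (.inr false)))] ∧ τ = .o ∧
        G.HT (mkApp (.sym (.inr N)) us) (.arr .o .o)) := by
  cases h with
  | init =>
      intro N ts e
      obtain ⟨rfl, e2⟩ := mkApp_eq_sym ts _ _ e.symm
      injection e2 with e3
      injection e3 with e4
      exact Or.inl ⟨rfl, rfl, Or.inl e4⟩
  | delta =>
      intro N ts e
      obtain ⟨rfl, e2⟩ := mkApp_eq_sym ts _ _ e.symm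
      injection e2 with e3
      injection e3 with e4
      exact Or.inl ⟨rfl, rfl, Or.inr e4⟩
  | term a =>
      intro N ts e
      obtain ⟨rfl, e2⟩ := mkApp_eq_sym ts _ _ e.symm
      injection e2 with e3
      simp at e3
  | app h1 h2 =>
      intro N ts e
      obtain ⟨l', rfl, hdec⟩ := mkApp_eq_app e.symm
      obtain ⟨c, gs, hgc⟩ := G.gt_arrow h1 .o _ rfl
      obtain ⟨e1, e2⟩ := mkApp_sym_inj _ _ _ _ (hdec.symm.trans hgc)
      simp at e1
  | nt hu =>
      intro N ts e
      obtain ⟨l', rfl, hdec⟩ := mkApp_eq_app e.symm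
      refine Or.inr ⟨l', rfl, rfl, ?_⟩
      rwa [← hdec]

lemma gt_subt {s t : G.barScheme.T} (hs : Subt s t) :
    ∀ τ, G.GT t τ → (∃ τ', G.GT s τ') ∨ (∃ σ, G.HT s σ) := by
  induction hs with
  | refl => intro τ h; exact Or.inl ⟨τ, h⟩
  | appL h ih =>
      intro τ hh
      cases hh with
      | app h1 h2 => exact ih _ h1
      | nt hu => exact Or.inr (G.ht_subt h _ hu)
  | appR h ih =>
      intro τ hh
      cases hh with
      | app h1 h2 => exact ih _ h2
      | nt hu => exact Or.inl ⟨.o, by rw [subt_sym h]; exact GT.delta⟩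

lemma arity_arr (a b : Ty) : (Ty.arr a b).arity = b.arity + 1 := rfl

lemma ht_no_step {u u' : G.barScheme.T} (h : G.barScheme.Step u u') :
    ∀ σ, ¬ G.HT u σ := by
  induction h with
  | @head F ts e hr hl =>
      intro σ hht
      obtain ⟨tys, hty, hf⟩ := G.ht_spine hht _ _ rfl
      obtain ⟨a, b, rfl⟩ := G.ht_arrow hht
      have hlen := hf.length_eq
      have h1 := congrArg Ty.arity hty
      rw [Ty.arity_foldr, arity_arr] at h1
      have h2 : ts.length = (G.ntTyBar F).arity := hl
      omega
  | appL hstep ih =>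
      intro σ hht
      cases hht with
      | app h1 h2 hne => exact ih _ h1
  | appR hstep ih =>
      intro σ hht
      cases hht with
      | app h1 h2 hne => exact ih _ h2

lemma step_sym {x : G.Sig ⊕ G.NtBar} {u u' : G.barScheme.T}
    (h : G.barScheme.Step u u') (he : u = .sym x) :
    ∃ F, x = Sum.inr F ∧ ((G.barScheme).rule F).isSome := by
  cases h with
  | @head F ts e hr hl =>
      obtain ⟨rfl, e2⟩ := mkApp_eq_sym ts _ _ he
      injection e2 with e3
      exact ⟨F, e3.symm, by rw [hr]; rfl⟩
  | appL h => simp at he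
  | appR h => simp at he

lemma step_delta {u' : G.barScheme.T} :
    ¬ G.barScheme.Step (.sym (.inr (.inr (.inr false)))) u' := by
  intro h
  obtain ⟨F, hF, hsome⟩ := G.step_sym h rfl
  injection hF with hF
  subst hF
  have : (G.barScheme).rule (Sum.inr (Sum.inr false)) = none := rfl
  rw [this] at hsome
  simp at hsome

lemma inst_mkApp {k : ℕ} (θ : Fin k → G.barScheme.T) :
    ∀ (l : List (Tm (G.Sig ⊕ G.NtBar ⊕ Fin k))) (h : Tm (G.Sig ⊕ G.NtBar ⊕ Fin k)),
      G.barScheme.inst (mkApp h l) θ =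
        mkApp (G.barScheme.inst h θ) (l.map (fun x => G.barScheme.inst x θ)) := by
  intro l
  induction l with
  | nil => intro h; rfl
  | cons a l ih =>
      intro h
      exact ih (.app h a)

lemma subst_ht {τF : Ty} {e : Tm (G.Sig ⊕ G.Nt ⊕ Fin τF.arity)} {σ' : Ty}
    (h : HasType (ruleEnv G.Sig G.Nt G.sigTy G.ntTy τF) e σ')
    (θ : Fin τF.bar.arity → G.barScheme.T)
    (hθ : ∀ i : Fin τF.arity,
      G.HT (θ (Fin.cast (Ty.bar_arity τF).symm i.castSucc)) ((τF.args.get i).bar)) :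
    G.HT (G.barScheme.inst (G.barBody e) θ) σ'.bar := by
  induction h with
  | sym x =>
      rcases x with a | F | i
      · exact HT.headA a
      · exact HT.headF F
      · exact hθ i
  | app h1 h2 ih1 ih2 => exact HT.app ih1 ih2 (Ty.bar_ne_o _)

lemma gt_mkApp : ∀ (gs : List G.barScheme.T) (h : G.barScheme.T) (τ : Ty),
    G.GT h ((List.replicate gs.length .o).foldr .arr τ) → (∀ g ∈ gs, G.GT g .o) →
    G.GT (mkApp h gs) τ
  | [], h, τ, hh, _ => hh
  | g :: gs, h, τ, hh, hgs => by
      have hh' : G.GT (.app h g) ((List.replicate gs.length .o).foldr .arr τ) :=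
        GT.app (by simpa [List.replicate_succ] using hh) (hgs g (by simp))
      simpa [mkApp] using gt_mkApp gs (.app h g) τ hh' (fun x hx => hgs x (by simp [hx]))

lemma spine_tys {τ : Ty} {us : List G.barScheme.T} {tys : List Ty}
    (hty : τ.bar = tys.foldr .arr (.arr .o .o))
    (hf : List.Forall₂ (G.HT) us tys) :
    tys = τ.args.map Ty.bar ∧ us.length = τ.arity := by
  have h1 := congrArg Ty.arity hty
  rw [Ty.arity_foldr, arity_arr, Ty.bar_arity] at h1
  have hlen : (τ.args.map Ty.bar).length = tys.length := by
    simp only [List.length_map]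
    have h2 : Ty.o.args.length = 0 := rfl
    simp only [Ty.arity] at h1
    omega
  obtain ⟨e1, _⟩ := Ty.foldr_arr_inj _ _ _ _ hlen ((Ty.bar_foldr τ).symm.trans hty)
  refine ⟨e1.symm, ?_⟩
  rw [hf.length_eq, ← e1]
  simp [Ty.arity]

end HORS

namespace HORS

variable (G : HORS)

lemma preserve {t t' : G.barScheme.T} (h : G.barScheme.Step t t') :
    ∀ τ, G.GT t τ → G.GT t' τ := by
  induction h with
  | @head F ts e hr hl =>
      intro τ hgt
      rcases G.gt_nt_inv hgt F ts rfl with ⟨rfl, rfl, hN | hN⟩ | ⟨us, rfl, rfl, hht⟩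
      · -- F = I
        subst hN
        have hr' : (some (Tm.app (.sym (.inr (.inl (.inl G.S)))) G.deltaTm :
            Tm (G.Sig ⊕ G.NtBar ⊕ Fin _)) : Option _) = some e := hr
        injection hr' with he
        subst he
        have h1 := HT.headF (G := G) G.S
        rw [G.S_ty] at h1
        exact GT.nt h1
      · -- F = Δ : no rule
        subst hN
        have hr' : (none : Option (Tm (G.Sig ⊕ G.NtBar ⊕ Fin _))) = some e := hr
        cases hr'
      · -- main case : ts = us ++ [Δ]
        obtain ⟨tys, hty, hf⟩ := G.ht_spine hht F us rfl
        rcases F with F₀ | a | b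
        · -- F̄
          have hty' : (G.ntTy F₀).bar = tys.foldr .arr (.arr .o .o) := hty
          obtain ⟨htys, husl⟩ := G.spine_tys hty' hf
          have hr' : (G.rule F₀).map (fun e₀ =>
              (Tm.app (G.barBody e₀) G.deltaTm :
                Tm (G.Sig ⊕ G.NtBar ⊕ Fin (G.ntTy F₀).bar.arity))) = some e := hr
          replace hr' := Option.map_eq_some_iff.mp hr'
          obtain ⟨e₀, h₀, rfl⟩ := hr'
          refine GT.nt (G.subst_ht (G.ruleTyped F₀ e₀ h₀) _ ?_)
          intro i
          have hiu : (i : ℕ) < us.length := by rw [husl]; exact i.isLt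
          have hget : (us ++ [(.sym (.inr (.inr (.inr false))) : G.barScheme.T)]).get
              (Fin.cast hl.symm (Fin.cast (Ty.bar_arity (G.ntTy F₀)).symm i.castSucc)) =
              us.get ⟨i, hiu⟩ := by
            exact List.getElem_append_left hiu
          show G.HT ((us ++ [(.sym (.inr (.inr (.inr false))) : G.barScheme.T)]).get
              (Fin.cast hl.symm (Fin.cast (Ty.bar_arity (G.ntTy F₀)).symm i.castSucc)))
              ((G.ntTy F₀).args.get i).bar
          rw [hget]
          have hityl : (i : ℕ) < tys.length := by rw [hf.length_eq] at hiu; exact hiu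
          have := (List.forall₂_iff_get.mp hf).2 i hiu hityl
          rwa [show tys.get ⟨i, hityl⟩ = ((G.ntTy F₀).args.get i).bar by
            simp only [htys, List.get_eq_getElem, List.getElem_map]; rfl] at this
        · -- ā
          have hty' : (G.sigTy a).bar = tys.foldr .arr (.arr .o .o) := hty
          obtain ⟨htys, husl⟩ := G.spine_tys hty' hf
          have hr' : (some (G.aBody a) : Option _) = some e := hr
          injection hr' with he
          subst he
          rw [HORS.aBody]; erw [G.inst_mkApp]; erw [List.map_ofFn]
          refine G.gt_mkApp _ _ _ ?_ ?_
          · simp only [List.length_ofFn]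
            have hrep : (List.replicate (G.sigTy a).arity Ty.o).foldr .arr .o = G.sigTy a := by
              rw [← Ty.args_replicate (G.sigOrder a), Ty.args_foldr]
            rw [hrep]
            exact GT.term a
          · intro g hg
            rw [List.mem_ofFn] at hg
            obtain ⟨i, rfl⟩ := hg
            refine GT.nt (u := (us ++ [(.sym (.inr (.inr (.inr false))) : G.barScheme.T)]).get
              (Fin.cast hl.symm (Fin.cast (Ty.bar_arity (G.sigTy a)).symm i.castSucc))) ?_
            have hiu : (i : ℕ) < us.length := by rw [husl]; exact i.isLt
            have hget : (us ++ [(.sym (.inr (.inr (.inr false))) : G.barScheme.T)]).get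
                (Fin.cast hl.symm (Fin.cast (Ty.bar_arity (G.sigTy a)).symm i.castSucc)) =
                us.get ⟨i, hiu⟩ := by
              exact List.getElem_append_left hiu
            rw [hget]
            have hityl : (i : ℕ) < tys.length := by rw [hf.length_eq] at hiu; exact hiu
            have hht' := (List.forall₂_iff_get.mp hf).2 i hiu hityl
            have : tys.get ⟨i, hityl⟩ = Ty.arr .o .o := by
              simp only [htys, List.get_eq_getElem, List.getElem_map]
              have : (G.sigTy a).args[(i:ℕ)]'(by simp only [Ty.arity] at *; exact i.isLt) = Ty.o := by
                simp [Ty.args_replicate (G.sigOrder a)]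
              rw [this]
              rfl
            rwa [this] at hht'
        · -- Δ or I : impossible since ts nonempty
          have h1 := congrArg Ty.arity hty
          rw [Ty.arity_foldr, arity_arr] at h1
          have h2 : (us ++ [(.sym (.inr (.inr (.inr false))) : G.barScheme.T)]).length
              = (G.ntTyBar (Sum.inr (Sum.inr b))).arity := hl
          have h3 : (G.ntTyBar (Sum.inr (Sum.inr b))).arity = 0 := rfl
          rw [h3] at h2
          simp at h2
  | appL hstep ih =>
      intro τ hgt
      cases hgt with
      | app h1 h2 => exact GT.app (ih _ h1) h2
      | nt hu => exact absurd hu (by intro hc; exact G.ht_no_step hstep _ hc)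
  | appR hstep ih =>
      intro τ hgt
      cases hgt with
      | app h1 h2 => exact GT.app h1 (ih _ h2)
      | nt hu => exact absurd hstep (G.step_delta)

lemma acc_gt {t : G.barScheme.T} (ht : t ∈ (G.barScheme).Acc') : G.GT t .o := by
  have ht' : Relation.ReflTransGen (G.barScheme).Step
      (.sym (.inr (G.barScheme).S)) t := ht
  induction ht' with
  | refl => exact GT.init
  | tail hab hbc ih => exact G.preserve hbc _ (ih hab)

end HORS

/-- in Ḡ, a ground subterm of a term reachable from I is a redex
iff it is the initial non-terminal I or of the form F̄ t₁ ... t_k Δ (a fully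
applied non-terminal possessing a rule, whose last argument is Δ); moreover no
argument tᵢ of such a redex contains an occurrence of Δ. -/
theorem barScheme_redex_characterisation (G : HORS)
    (t : (G.barScheme).T) (ht : t ∈ (G.barScheme).Acc')
    (s : (G.barScheme).T) (hs : Subt s t)
    (hground : HasType (G.barScheme).symTy s Ty.o) :
    ((G.barScheme).IsRedex s ↔
      (s = Tm.sym (Sum.inr G.initNt) ∨
        ∃ (N : G.NtBar) (ts : List (G.barScheme).T),
          s = mkApp (Tm.sym (Sum.inr N)) (ts ++ [Tm.sym (Sum.inr G.deltaNt)]) ∧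
          ((G.barScheme).rule N).isSome ∧
          ts.length + 1 = ((G.barScheme).ntTy N).arity)) ∧
    (∀ (N : G.NtBar) (ts : List (G.barScheme).T),
      s = mkApp (Tm.sym (Sum.inr N)) (ts ++ [Tm.sym (Sum.inr G.deltaNt)]) →
      (G.barScheme).IsRedex s →
      ∀ ti ∈ ts, ¬ Subt (Tm.sym (Sum.inr G.deltaNt)) ti) := by
  have hgt : G.GT t .o := G.acc_gt ht
  have hdich := G.gt_subt hs _ hgt
  constructor
  · constructor
    · rintro ⟨F, ts, rfl, hlen, hsome⟩
      rcases hdich with ⟨τ', hgts⟩ | ⟨σ, hhts⟩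
      · rcases G.gt_nt_inv hgts F ts rfl with ⟨rfl, _, hN | hN⟩ | ⟨us, rfl, _, hht⟩
        · subst hN; left; rfl
        · subst hN
          have hrd : (G.barScheme).rule (Sum.inr (Sum.inr false)) = none := rfl
          rw [hrd] at hsome
          simp at hsome
        · right
          refine ⟨F, us, rfl, hsome, ?_⟩
          simpa using hlen
      · exfalso
        obtain ⟨tys, hty, hf⟩ := G.ht_spine hhts F ts rfl
        obtain ⟨a, b, rfl⟩ := G.ht_arrow hhts
        have hl2 := hf.length_eq
        have h1 := congrArg Ty.arity hty
        rw [Ty.arity_foldr, HORS.arity_arr] at h1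
        have h2 : ts.length = (G.ntTyBar F).arity := hlen
        omega
    · rintro (rfl | ⟨N, ts, rfl, hsome, hlen⟩)
      · exact ⟨Sum.inr (Sum.inr true), [], rfl, rfl, rfl⟩
      · exact ⟨N, ts ++ [_], rfl, by rw [List.length_append]; exact hlen, hsome⟩
  · rintro N ts heq hred ti hti hsub
    rcases hdich with ⟨τ', hgts⟩ | ⟨σ, hhts⟩
    · rcases G.gt_nt_inv hgts N _ heq with ⟨habs, _⟩ | ⟨us, hus, _, hht⟩
      · cases ts <;> cases habs
      · have hts : ts = us := by
          have h' : ts ++ [(Tm.sym (Sum.inr G.deltaNt) : G.barScheme.T)] =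
              us ++ [.sym (.inr (.inr (.inr false)))] := hus
          simpa [HORS.deltaNt] using h'
        subst hts
        obtain ⟨tys, hty, hf⟩ := G.ht_spine hht N ts rfl
        obtain ⟨ty, hty2⟩ := forall₂_mem_left hf ti hti
        exact G.ht_no_delta hty2 hsub
    · refine G.ht_no_delta hhts ?_
      have := mkApp_concat (Tm.sym (Sum.inr N) : G.barScheme.T) ts (Tm.sym (Sum.inr G.deltaNt))
      rw [heq]
      exact (congrArg (Subt _) this).mpr (Subt.appR (Subt.refl _))
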